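/- For the fully implicit first stage of the semi-discrete scheme, defined weakly by (u¹,v) − Δt·a₁₁·(ā/ε)(ρ¹, ∇·v) = (uⁿ,v) for all v ∈ H(div;T^d), and −Δt·a₁₁·(ā/ε)(∇·u¹, λ) − (ρ¹,λ) = −(ρⁿ,λ) for all λ ∈ L²(T^d), any solution (u¹,ρ¹) satisfies the energy estimate E¹ ≤ Eⁿ, where E := ½(‖u‖²_{L²} + ‖ρ‖²_{L²}). -/

import Mathlib

open MeasureTheory

noncomputable section

abbrev Pt (d : ℕ) := EuclideanSpace ℝ (Fin d)

def Per {d : ℕ} {α : Type*} (f : Pt d → α) : Prop :=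
  ∀ (x : Pt d) (i : Fin d), f (x + EuclideanSpace.single i 1) = f x

def Box (d : ℕ) : Set (Pt d) := {x | ∀ i, x i ∈ Set.Icc (0 : ℝ) 1}

def dvg {d : ℕ} (u : Pt d → Pt d) (x : Pt d) : ℝ :=
  ∑ i, fderiv ℝ u x (EuclideanSpace.single i 1) i

def Smoo {d : ℕ} {F : Type*} [NormedAddCommGroup F] [NormedSpace ℝ F]
    (f : Pt d → F) : Prop := ContDiff ℝ (⊤ : ℕ∞) f

/-- Energy estimate for the fully implicit first stage of the semi-discrete
scheme: any weak solution `(u¹,ρ¹)` of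
`(u¹,v) − Δt a₁₁ (ā/ε)(ρ¹,∇·v) = (uⁿ,v)` and
`−Δt a₁₁ (ā/ε)(∇·u¹,λ) − (ρ¹,λ) = −(ρⁿ,λ)` satisfies `E¹ ≤ Eⁿ`,
where `E = ½(‖u‖² + ‖ρ‖²)`. -/
theorem implicit_first_stage_energy_estimate (d : ℕ)
    (Δt a11 ab ε : ℝ) (hΔt : 0 < Δt) (hab : 0 < ab) (hε : 0 < ε)
    (ρn ρ1 : Pt d → ℝ) (un u1 : Pt d → Pt d)
    (hρn : Smoo ρn) (hρ1 : Smoo ρ1) (hun : Smoo un) (hu1 : Smoo u1)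
    (hpρn : Per ρn) (hpρ1 : Per ρ1) (hpun : Per un) (hpu1 : Per u1)
    (hweak₁ : ∀ v : Pt d → Pt d, Smoo v → Per v →
      (∫ x in Box d, (inner ℝ (u1 x) (v x) : ℝ)) -
        Δt * a11 * (ab / ε) * (∫ x in Box d, ρ1 x * dvg v x) =
      ∫ x in Box d, (inner ℝ (un x) (v x) : ℝ))
    (hweak₂ : ∀ l : Pt d → ℝ, Smoo l → Per l →
      -(Δt * a11 * (ab / ε) * (∫ x in Box d, dvg u1 x * l x)) -
        (∫ x in Box d, ρ1 x * l x) =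
      -(∫ x in Box d, ρn x * l x)) :
    (1 / 2) * ((∫ x in Box d, ‖u1 x‖ ^ 2) + ∫ x in Box d, (ρ1 x) ^ 2) ≤
    (1 / 2) * ((∫ x in Box d, ‖un x‖ ^ 2) + ∫ x in Box d, (ρn x) ^ 2) := by
  have hK : IsCompact (Box d) := by
    have hEq : Box d = (EuclideanSpace.equiv (Fin d) ℝ).toHomeomorph ⁻¹'
        (Set.univ.pi fun _ => Set.Icc (0 : ℝ) 1) := by
      ext x
      constructor
      · exact fun h i _ => h i
      · exact fun h i => h i trivial
    rw [hEq]
    exact (Homeomorph.isCompact_preimage _).mpr (isCompact_univ_pi fun _ => isCompact_Icc)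
  have hms : MeasurableSet (Box d) := hK.isClosed.measurableSet
  -- integrabilities
  have i_u1 : IntegrableOn (fun x => ‖u1 x‖ ^ 2) (Box d) :=
    ((hu1.continuous.norm.pow 2)).continuousOn.integrableOn_compact hK
  have i_un : IntegrableOn (fun x => ‖un x‖ ^ 2) (Box d) :=
    ((hun.continuous.norm.pow 2)).continuousOn.integrableOn_compact hK
  have i_ρ1 : IntegrableOn (fun x => ρ1 x ^ 2) (Box d) :=
    ((hρ1.continuous.pow 2)).continuousOn.integrableOn_compact hK
  have i_ρn : IntegrableOn (fun x => ρn x ^ 2) (Box d) :=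
    ((hρn.continuous.pow 2)).continuousOn.integrableOn_compact hK
  have i_in : IntegrableOn (fun x => (inner ℝ (un x) (u1 x) : ℝ)) (Box d) :=
    (hun.continuous.inner hu1.continuous).continuousOn.integrableOn_compact hK
  have i_pr : IntegrableOn (fun x => ρn x * ρ1 x) (Box d) :=
    (hρn.continuous.mul hρ1.continuous).continuousOn.integrableOn_compact hK
  have h1 := hweak₁ u1 hu1 hpu1
  have h2 := hweak₂ ρ1 hρ1 hpρ1
  have hcomm : (∫ x in Box d, ρ1 x * dvg u1 x) = ∫ x in Box d, dvg u1 x * ρ1 x := by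
    apply integral_congr_ae
    filter_upwards with x
    ring
  rw [hcomm] at h1
  have hself : (∫ x in Box d, (inner ℝ (u1 x) (u1 x) : ℝ)) = ∫ x in Box d, ‖u1 x‖ ^ 2 := by
    apply integral_congr_ae
    filter_upwards with x
    rw [real_inner_self_eq_norm_sq]
  have hsq : (∫ x in Box d, ρ1 x * ρ1 x) = ∫ x in Box d, ρ1 x ^ 2 := by
    apply integral_congr_ae
    filter_upwards with x
    ring
  rw [hself] at h1
  rw [hsq] at h2
  have hb1 : (∫ x in Box d, (inner ℝ (un x) (u1 x) : ℝ)) ≤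
      ∫ x in Box d, (‖un x‖ ^ 2 / 2 + ‖u1 x‖ ^ 2 / 2) := by
    apply setIntegral_mono_on i_in ((i_un.div_const 2).add (i_u1.div_const 2)) hms
    intro x _
    simp only [Pi.add_apply]
    have h := real_inner_le_norm (un x) (u1 x)
    nlinarith [sq_nonneg (‖un x‖ - ‖u1 x‖)]
  have hb2 : (∫ x in Box d, ρn x * ρ1 x) ≤
      ∫ x in Box d, (ρn x ^ 2 / 2 + ρ1 x ^ 2 / 2) := by
    apply setIntegral_mono_on i_pr ((i_ρn.div_const 2).add (i_ρ1.div_const 2)) hms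
    intro x _
    simp only [Pi.add_apply]
    nlinarith [sq_nonneg (ρn x - ρ1 x)]
  rw [integral_add (i_un.div_const 2) (i_u1.div_const 2), integral_div, integral_div] at hb1
  rw [integral_add (i_ρn.div_const 2) (i_ρ1.div_const 2), integral_div, integral_div] at hb2
  linarith
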